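/- For each connected component G_i of a labelled directed graph G, the indicator row vector of the nodes of G_i lies in the left kernel of the Laplacian A(κ); if moreover each connected component of G has exactly one terminal strongly connected component, these indicator vectors span the left kernel of A(κ). -/

import Mathlib

open Matrix

/-- The Laplacian matrix of a labelled digraph: `κ i j` is the label of the edge
`j → i` (and `0` if there is no such edge); the diagonal of `κ` is zero. -/
def Lap {d : ℕ} (κ : Fin d → Fin d → ℝ) : Matrix (Fin d) (Fin d) ℝ :=
  fun i j => if i = j then -(∑ ℓ, κ ℓ j) else κ i j

/-- `E i j` means the digraph has an edge `j → i` (matching the Laplacian convention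
`a_{ij} = κ_{ij}` for the edge `j → i`).  `reach E a b` : `b` is reachable from `a`
along directed edges. -/
def reach {d : ℕ} (E : Fin d → Fin d → Prop) (a b : Fin d) : Prop :=
  Relation.ReflTransGen (fun u v => E v u) a b

/-- Reachability in the underlying undirected graph. -/
def reachU {d : ℕ} (E : Fin d → Fin d → Prop) (a b : Fin d) : Prop :=
  Relation.ReflTransGen (fun u v => E v u ∨ E u v) a b

/-- κ is an admissible labelling for the edge set `E`: positive on edges, zero
elsewhere. -/
def Admissible {d : ℕ} (E : Fin d → Fin d → Prop) (κ : Fin d → Fin d → ℝ) : Prop :=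
  ∀ i j, (E i j → 0 < κ i j) ∧ (¬ E i j → κ i j = 0)

/-- `S` is a terminal strongly connected component of the digraph with edge set `E`. -/
def IsTermSCC {d : ℕ} (E : Fin d → Fin d → Prop) (S : Set (Fin d)) : Prop :=
  ∃ a, S = {b | reach E a b ∧ reach E b a} ∧ ∀ b, reach E a b → reach E b a

section Aux

variable {d : ℕ} {E : Fin d → Fin d → Prop} {κ : Fin d → Fin d → ℝ}

lemma reach_reachU {a b : Fin d} (h : reach E a b) : reachU E a b :=
  by
    unfold reach at h; unfold reachU
    induction h with
    | refl => exact Relation.ReflTransGen.refl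
    | tail _ hbc ih => exact Relation.ReflTransGen.tail ih (Or.inl hbc)

lemma reachU_symm {a b : Fin d} (h : reachU E a b) : reachU E b a :=
  by
    unfold reachU at h ⊢
    induction h with
    | refl => exact Relation.ReflTransGen.refl
    | tail _ hbc ih => exact Relation.ReflTransGen.head hbc.symm ih

lemma reachU_trans {a b c : Fin d} (h1 : reachU E a b) (h2 : reachU E b c) : reachU E a c :=
  Relation.ReflTransGen.trans h1 h2

lemma edge_reachU {i j : Fin d} (h : E i j) : reachU E j i :=
  Relation.ReflTransGen.single (Or.inl h)

/-- harmonicity condition for a left-kernel vector -/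
def Harm {d : ℕ} (κ : Fin d → Fin d → ℝ) (w : Fin d → ℝ) : Prop :=
  ∀ j, ∑ i, w i * κ i j = w j * (∑ ℓ, κ ℓ j)

lemma sum_lap_col (hd : ∀ j, κ j j = 0) (w : Fin d → ℝ) (j : Fin d) :
    ∑ i, w i * Lap κ i j = (∑ i, w i * κ i j) - w j * (∑ ℓ, κ ℓ j) := by
  have h : ∀ i, w i * Lap κ i j
      = w i * κ i j + (if i = j then -(w j * ∑ ℓ, κ ℓ j) else 0) := by
    intro i
    by_cases h : i = j
    · subst h; simp [Lap, hd i]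
    · simp [Lap, h]
  simp only [h, Finset.sum_add_distrib, Finset.sum_ite_eq' Finset.univ j, Finset.mem_univ,
    if_true, sub_eq_add_neg]

lemma maxStep (hκ : Admissible E κ) {w : Fin d → ℝ} (hw : Harm κ w)
    {j : Fin d} {M : ℝ} (hle : ∀ i, E i j → w i ≤ M) (hj : w j = M)
    {i : Fin d} (hi : E i j) : w i = M := by
  have key : ∑ i, (M - w i) * κ i j = 0 := by
    have h1 := hw j
    have h2 : ∑ i, (M - w i) * κ i j = M * (∑ ℓ, κ ℓ j) - ∑ i, w i * κ i j := by
      simp [sub_mul, Finset.sum_sub_distrib, Finset.mul_sum]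
    rw [h2, h1, hj]; ring
  have nonneg : ∀ i ∈ Finset.univ, 0 ≤ (M - w i) * κ i j := by
    intro i _
    by_cases h : E i j
    · exact mul_nonneg (sub_nonneg.2 (hle i h)) (le_of_lt ((hκ i j).1 h))
    · rw [(hκ i j).2 h, mul_zero]
  have hz := (Finset.sum_eq_zero_iff_of_nonneg nonneg).1 key i (Finset.mem_univ i)
  have hκpos := (hκ i j).1 hi
  have : M - w i = 0 := by
    rcases mul_eq_zero.1 hz with h | h
    · exact h
    · exact absurd h (ne_of_gt hκpos)
  linarith

lemma maxReach (hκ : Admissible E κ) {w : Fin d → ℝ} (hw : Harm κ w)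
    {x : Fin d} {M : ℝ} (hM : ∀ i, reachU E x i → w i ≤ M) (hx : w x = M) :
    ∀ y, reach E x y → w y = M := by
  intro y hy
  induction hy with
  | refl => exact hx
  | @tail b c hab hbc ih =>
    refine maxStep hκ hw (fun i hi => hM i ?_) ih hbc
    exact reachU_trans (reach_reachU hab) (edge_reachU hi)

lemma minReach (hκ : Admissible E κ) {w : Fin d → ℝ} (hw : Harm κ w)
    {x : Fin d} {m : ℝ} (hm : ∀ i, reachU E x i → m ≤ w i) (hx : w x = m) :
    ∀ y, reach E x y → w y = m := by
  have hw' : Harm κ (fun i => -(w i)) := by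
    intro j
    have := hw j
    simp only [neg_mul, Finset.sum_neg_distrib]
    rw [this]
  intro y hy
  have := maxReach hκ hw' (x := x) (M := -m)
    (fun i hi => neg_le_neg (hm i hi)) (by simp [hx]) y hy
  simpa using congrArg Neg.neg this

lemma exists_term (E : Fin d → Fin d → Prop) (x : Fin d) :
    ∃ y, reach E x y ∧ ∀ b, reach E y b → reach E b y := by
  classical
  obtain ⟨y, hy, hmin⟩ := Finset.exists_min_image
    (Finset.univ.filter (fun z => reach E x z))
    (fun z => (Finset.univ.filter (fun c => reach E z c)).card)
    ⟨x, by
      simp only [Finset.mem_filter, Finset.mem_univ, true_and]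
      exact Relation.ReflTransGen.refl⟩
  have hxy : reach E x y := by simpa using hy
  refine ⟨y, hxy, fun b hb => ?_⟩
  have hxb : reach E x b := hxy.trans hb
  have hsub : Finset.univ.filter (fun c => reach E b c)
      ⊆ Finset.univ.filter (fun c => reach E y c) := by
    intro c hc
    simp only [Finset.mem_filter, Finset.mem_univ, true_and] at hc ⊢
    exact hb.trans hc
  have hcard := hmin b (by simpa using hxb)
  have heq := Finset.eq_of_subset_of_card_le hsub hcard
  have : y ∈ Finset.univ.filter (fun c => reach E b c) := by
    rw [heq]
    simp only [Finset.mem_filter, Finset.mem_univ, true_and]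
    exact Relation.ReflTransGen.refl
  simpa using this

lemma const_on_comp (hκ : Admissible E κ)
    (hU : ∀ a : Fin d, ∃! S : Set (Fin d), IsTermSCC E S ∧ S ⊆ {b | reachU E a b})
    {w : Fin d → ℝ} (hw : Harm κ w) :
    ∀ a b, reachU E a b → w a = w b := by
  classical
  intro a b hab
  set C : Finset (Fin d) := Finset.univ.filter (fun c => reachU E a c) with hC
  have haC : a ∈ C := by
    simp only [hC, Finset.mem_filter, Finset.mem_univ, true_and]
    exact Relation.ReflTransGen.refl
  have hmemC : ∀ c, c ∈ C ↔ reachU E a c := by intro c; simp [hC]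
  obtain ⟨x, hxC, hxmax⟩ := Finset.exists_max_image C w ⟨a, haC⟩
  obtain ⟨z, hzC, hzmin⟩ := Finset.exists_min_image C w ⟨a, haC⟩
  have hax : reachU E a x := (hmemC x).1 hxC
  have haz : reachU E a z := (hmemC z).1 hzC
  -- terminal SCC reachable from x
  obtain ⟨y, hxy, hyterm⟩ := exists_term E x
  obtain ⟨y', hzy', hy'term⟩ := exists_term E z
  have hay : reachU E a y := reachU_trans hax (reach_reachU hxy)
  have hay' : reachU E a y' := reachU_trans haz (reach_reachU hzy')
  set Sy : Set (Fin d) := {c | reach E y c ∧ reach E c y} with hSy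
  set Sz : Set (Fin d) := {c | reach E y' c ∧ reach E c y'} with hSz
  have hSyP : IsTermSCC E Sy ∧ Sy ⊆ {c | reachU E a c} := by
    refine ⟨⟨y, rfl, hyterm⟩, fun c hc => ?_⟩
    exact reachU_trans hay (reach_reachU hc.1)
  have hSzP : IsTermSCC E Sz ∧ Sz ⊆ {c | reachU E a c} := by
    refine ⟨⟨y', rfl, hy'term⟩, fun c hc => ?_⟩
    exact reachU_trans hay' (reach_reachU hc.1)
  obtain ⟨S, _, hSuniq⟩ := hU a
  have hSS : Sy = Sz := (hSuniq _ hSyP).trans (hSuniq _ hSzP).symm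
  have hySz : y ∈ Sz := by
    rw [← hSS]; exact ⟨Relation.ReflTransGen.refl, Relation.ReflTransGen.refl⟩
  have hzy : reach E z y := hzy'.trans hySz.1
  -- w y = w x  (max propagation)
  have hwyx : w y = w x := by
    refine maxReach hκ hw (x := x) (M := w x) (fun i hi => ?_) rfl y hxy
    exact hxmax i ((hmemC i).2 (reachU_trans hax hi))
  -- w y = w z  (min propagation)
  have hwyz : w y = w z := by
    refine minReach hκ hw (x := z) (m := w z) (fun i hi => ?_) rfl y hzy
    exact hzmin i ((hmemC i).2 (reachU_trans haz hi))
  have hxz : w x = w z := by rw [← hwyx, hwyz]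
  have hconst : ∀ c ∈ C, w c = w x := by
    intro c hc
    have h1 := hxmax c hc
    have h2 := hzmin c hc
    linarith [hxz]
  have hbC : b ∈ C := (hmemC b).2 hab
  rw [hconst a haC, hconst b hbC]

end Aux

/-- For each (weakly) connected component of a labelled digraph, the indicator row
vector of its nodes lies in the left kernel of the Laplacian; if moreover each
connected component has exactly one terminal strongly connected component, these
indicator vectors span the left kernel. -/
theorem indicator_components_left_ker_Lap {d : ℕ} (E : Fin d → Fin d → Prop)
    (hirr : ∀ i, ¬ E i i) (κ : Fin d → Fin d → ℝ) (hκ : Admissible E κ) :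
    (∀ a : Fin d,
      (Set.indicator {b | reachU E a b} (fun _ => (1 : ℝ))) ᵥ* Lap κ = 0) ∧
    ((∀ a : Fin d, ∃! S : Set (Fin d), IsTermSCC E S ∧ S ⊆ {b | reachU E a b}) →
      Submodule.span ℝ
          {w : Fin d → ℝ | ∃ a, w = Set.indicator {b | reachU E a b} fun _ => (1 : ℝ)} =
        LinearMap.ker (Matrix.toLin' (Lap κ)ᵀ)) := by
  classical
  have hd : ∀ j, κ j j = 0 := fun j => (hκ j j).2 (hirr j)
  -- part 1
  have part1 : ∀ a : Fin d,
      (Set.indicator {b | reachU E a b} (fun _ => (1 : ℝ))) ᵥ* Lap κ = 0 := by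
    intro a
    funext j
    set v := Set.indicator {b | reachU E a b} (fun _ => (1 : ℝ)) with hv
    have hvapp : ∀ i, v i = if reachU E a i then 1 else 0 := by
      intro i; simp [hv, Set.indicator_apply]
    have hvm : (v ᵥ* Lap κ) j = ∑ i, v i * Lap κ i j := by
      simp [Matrix.vecMul, dotProduct]
    rw [hvm, sum_lap_col hd]
    by_cases hj : reachU E a j
    · have h1 : ∀ i, v i * κ i j = κ i j := by
        intro i
        by_cases hi : reachU E a i
        · rw [hvapp i, if_pos hi, one_mul]
        · rw [hvapp i, if_neg hi, zero_mul]
          by_cases hE : E i j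
          · exact absurd (reachU_trans hj (edge_reachU hE)) hi
          · exact ((hκ i j).2 hE).symm
      simp only [h1, hvapp j, if_pos hj, one_mul]
      simp
    · have h1 : ∀ i, v i * κ i j = 0 := by
        intro i
        by_cases hi : reachU E a i
        · have hE : ¬ E i j := fun hE =>
            hj (reachU_trans hi (reachU_symm (edge_reachU hE)))
          rw [(hκ i j).2 hE, mul_zero]
        · rw [hvapp i, if_neg hi, zero_mul]
      simp only [h1, hvapp j, if_neg hj, zero_mul]
      simp
  refine ⟨part1, fun hU => ?_⟩
  -- kernel membership as summation condition
  have hker : ∀ w : Fin d → ℝ,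
      w ∈ LinearMap.ker (Matrix.toLin' (Lap κ)ᵀ) ↔ ∀ j, ∑ i, w i * Lap κ i j = 0 := by
    intro w
    rw [LinearMap.mem_ker, Matrix.toLin'_apply]
    constructor
    · intro h j
      have := congrFun h j
      simpa [Matrix.mulVec, dotProduct, mul_comm] using this
    · intro h
      funext j
      have := h j
      simpa [Matrix.mulVec, dotProduct, mul_comm] using this
  apply le_antisymm
  · rw [Submodule.span_le]
    rintro w ⟨a, rfl⟩
    rw [SetLike.mem_coe, hker]
    intro j
    have := congrFun (part1 a) j
    simpa [Matrix.vecMul, dotProduct] using this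
  · intro w hwk
    have hharm : Harm κ w := by
      intro j
      have := (hker w).1 hwk j
      rw [sum_lap_col hd] at this
      linarith
    have hconst := const_on_comp hκ hU hharm
    set n : Fin d → ℕ := fun c => (Finset.univ.filter (fun e => reachU E c e)).card with hn
    have hwe : w = ∑ c : Fin d,
        (w c / n c) • Set.indicator {e | reachU E c e} (fun _ => (1 : ℝ)) := by
      funext b
      rw [Finset.sum_apply]
      have hterm : ∀ c : Fin d,
          ((w c / n c) • Set.indicator {e | reachU E c e} (fun _ => (1 : ℝ))) b
            = if reachU E c b then w c / n c else 0 := by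
        intro c
        by_cases h : reachU E c b <;> simp [Set.indicator_apply, h]
      simp only [hterm]
      rw [← Finset.sum_filter]
      have hcb : ∀ c ∈ Finset.univ.filter (fun c => reachU E c b),
          w c / (n c : ℝ) = w b / (n b : ℝ) := by
        intro c hc
        have hcb' : reachU E c b := by simpa using hc
        have h1 : w c = w b := hconst c b hcb'
        have hfe : Finset.univ.filter (fun e => reachU E c e)
            = Finset.univ.filter (fun e => reachU E b e) :=
          Finset.filter_congr (fun e _ =>
            ⟨fun h => reachU_trans (reachU_symm hcb') h, fun h => reachU_trans hcb' h⟩)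
        have h2 : n c = n b := by simp only [hn]; rw [hfe]
        rw [h1, h2]
      rw [Finset.sum_congr rfl hcb, Finset.sum_const]
      have hcard : (Finset.univ.filter (fun c => reachU E c b)).card = n b := by
        have hfe : Finset.univ.filter (fun c => reachU E c b)
            = Finset.univ.filter (fun e => reachU E b e) :=
          Finset.filter_congr (fun e _ =>
            ⟨fun h => reachU_symm h, fun h => reachU_symm h⟩)
        simp only [hn]; rw [hfe]
      have hbmem : b ∈ Finset.univ.filter (fun e => reachU E b e) := by
        simp only [Finset.mem_filter, Finset.mem_univ, true_and]
        exact Relation.ReflTransGen.refl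
      have hnb : (n b : ℝ) ≠ 0 := by
        have : n b ≠ 0 := by
          rw [hn]
          exact Finset.card_ne_zero_of_mem hbmem
        exact_mod_cast this
      rw [hcard, nsmul_eq_mul]
      field_simp
    rw [hwe]
    exact Submodule.sum_mem _ fun c _ =>
      Submodule.smul_mem _ _ (Submodule.subset_span ⟨c, rfl⟩)
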